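/- Let σ ∈ {Y, Z} and let (G, I, O, λ) be an extended open graph with a gflow and |I| = |O|. Then (G, I, O, λ) has a σ-NF gflow if and only if σ ∈ λ(u) for every u ∈ Iᶜ ∩ Oᶜ. -/

import Mathlib

open scoped symmDiff

inductive Pauli | X | Y | Z
deriving DecidableEq

inductive MPlane | XY | XZ | YZ
deriving DecidableEq

/-- The set of Pauli operators defining a measurement plane. -/
def MPlane.paulis : MPlane → Finset Pauli
  | .XY => {.X, .Y}
  | .XZ => {.X, .Z}
  | .YZ => {.Y, .Z}

variable {V : Type} [Fintype V] [DecidableEq V]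

/-- Odd neighbourhood: vertices with an odd number of neighbours in `A`. -/
def oddNbhd (G : SimpleGraph V) [DecidableRel G.Adj] (A : Finset V) : Finset V :=
  Finset.univ.filter fun w => Odd (A.filter (G.Adj w)).card

/-- `f` is extensive w.r.t. the strict order `r`. -/
def IsExtensive (O : Finset V) (r : V → V → Prop) (f : V → Finset V) : Prop :=
  ∀ u ∉ O, ∀ v ∈ f u, v ≠ u → r u v

/-- gflow of an extended open graph `(G, I, O, lam)`. -/
def IsGflow (G : SimpleGraph V) [DecidableRel G.Adj]
    (I O : Finset V) (lam : V → MPlane) (g : V → Finset V) : Prop :=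
  (∀ u ∉ O, g u ⊆ Iᶜ) ∧
  (∃ r : V → V → Prop, IsStrictOrder V r ∧
    IsExtensive O r (fun u => g u ∪ oddNbhd G (g u))) ∧
  ∀ u ∉ O,
    (lam u = .XY → u ∈ oddNbhd G (g u) ∧ u ∉ g u) ∧
    (lam u = .XZ → u ∈ g u ∧ u ∈ oddNbhd G (g u)) ∧
    (lam u = .YZ → u ∈ g u ∧ u ∉ oddNbhd G (g u))

/-- σ-normal forms for gflows. -/
def IsNF (σ : Pauli) (G : SimpleGraph V) [DecidableRel G.Adj]
    (O : Finset V) (g : V → Finset V) : Prop :=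
  match σ with
  | .X => ∀ u ∉ O, oddNbhd G (g u) ⊆ insert u O
  | .Y => ∀ u ∉ O, (g u ∆ oddNbhd G (g u)) ⊆ insert u O
  | .Z => ∀ u ∉ O, g u ⊆ insert u O

set_option linter.unusedSectionVars false

section Toolkit
variable {V : Type} [Fintype V] [DecidableEq V]

lemma zmod2_cases (a : ZMod 2) : a = 0 ∨ a = 1 := by revert a; decide

lemma natCast_zmod2 (n : ℕ) : ((n : ℕ) : ZMod 2) = if Odd n then 1 else 0 := by
  rw [← ZMod.natCast_mod n 2]
  rcases Nat.even_or_odd n with h | h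
  · simp [Nat.even_iff.mp h, Nat.not_odd_iff_even.mpr h]
  · simp [Nat.odd_iff.mp h, h]

/-- indicator function with values in `ZMod 2` -/
def ind (A : Finset V) : V → ZMod 2 := fun x => if x ∈ A then 1 else 0

lemma ind_eq_one {A : Finset V} {x : V} : ind A x = 1 ↔ x ∈ A := by
  simp [ind]

lemma ind_eq_zero {A : Finset V} {x : V} : ind A x = 0 ↔ x ∉ A := by
  by_cases h : x ∈ A <;> simp [ind, h]

lemma ind_symmDiff (A B : Finset V) (x : V) : ind (A ∆ B) x = ind A x + ind B x := by
  by_cases hA : x ∈ A <;> by_cases hB : x ∈ B <;>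
    (simp [ind, Finset.mem_symmDiff, hA, hB]; try decide)

lemma mem_oddNbhd {G : SimpleGraph V} [DecidableRel G.Adj] {A : Finset V} {x : V} :
    x ∈ oddNbhd G A ↔ Odd (A.filter (G.Adj x)).card := by
  simp [oddNbhd]

lemma ind_oddNbhd (G : SimpleGraph V) [DecidableRel G.Adj] (A : Finset V) (x : V) :
    ind (oddNbhd G A) x = ∑ y ∈ Finset.univ, ind A y * (if G.Adj x y then 1 else 0) := by
  have h1 : ∀ y : V, ind A y * (if G.Adj x y then (1 : ZMod 2) else 0)
      = if y ∈ A ∧ G.Adj x y then 1 else 0 := by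
    intro y
    by_cases h : y ∈ A <;> by_cases h' : G.Adj x y <;> simp [ind, h, h']
  rw [Finset.sum_congr rfl fun y _ => h1 y, Finset.sum_boole]
  have h2 : Finset.univ.filter (fun y => y ∈ A ∧ G.Adj x y) = A.filter (G.Adj x) := by
    ext y; simp
  rw [h2, natCast_zmod2]
  by_cases h : Odd (A.filter (G.Adj x)).card <;> simp [ind, mem_oddNbhd, h]

lemma ind_oddNbhd_symmDiff (G : SimpleGraph V) [DecidableRel G.Adj] (A B : Finset V) (x : V) :
    ind (oddNbhd G (A ∆ B)) x = ind (oddNbhd G A) x + ind (oddNbhd G B) x := by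
  rw [ind_oddNbhd, ind_oddNbhd, ind_oddNbhd, ← Finset.sum_add_distrib]
  exact Finset.sum_congr rfl fun y _ => by rw [ind_symmDiff, add_mul]

instance : Std.Commutative (α := Finset V) (· ∆ ·) := ⟨symmDiff_comm⟩
instance : Std.Associative (α := Finset V) (· ∆ ·) := ⟨symmDiff_assoc⟩

/-- symmetric difference of a finite family -/
def sdSum {ι : Type} (s : Finset ι) (f : ι → Finset V) : Finset V :=
  s.fold (· ∆ ·) ∅ f

lemma ind_sdSum_lin {ι : Type} [DecidableEq ι] {D : Finset V → Finset V}
    (hD : ∀ A B x, ind (D (A ∆ B)) x = ind (D A) x + ind (D B) x)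
    (s : Finset ι) (f : ι → Finset V) (x : V) :
    ind (D (sdSum s f)) x = ∑ i ∈ s, ind (D (f i)) x := by
  induction s using Finset.induction_on with
  | empty =>
      have h0 := hD ∅ ∅ x
      rw [symmDiff_self, Finset.bot_eq_empty] at h0
      have : ind (D ∅) x = 0 := by
        rcases zmod2_cases (ind (D (∅ : Finset V)) x) with h | h
        · exact h
        · rw [h] at h0; exact absurd h0 (by decide)
      simpa [sdSum] using this
  | insert _ _ hi ih =>
      rw [sdSum, Finset.fold_insert hi, ← sdSum, hD, Finset.sum_insert hi, ih]

lemma exists_mem_of_sum_ne_zero {ι : Type} (s : Finset ι) (f : ι → ZMod 2)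
    (h : ∑ i ∈ s, f i ≠ 0) : ∃ i ∈ s, f i = 1 := by
  obtain ⟨i, hi, hfi⟩ := Finset.exists_ne_zero_of_sum_ne_zero h
  rcases zmod2_cases (f i) with h0 | h1
  · exact absurd h0 hfi
  · exact ⟨i, hi, h1⟩

end Toolkit

section Construction
variable {V : Type} [Fintype V] [DecidableEq V]

lemma exists_nf (G : SimpleGraph V) [DecidableRel G.Adj] (I O : Finset V) (lam : V → MPlane)
    (g : V → Finset V) (D : Finset V → Finset V)
    (hDlin : ∀ A B x, ind (D (A ∆ B)) x = ind (D A) x + ind (D B) x)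
    (hDsub : ∀ (A : Finset V) (x : V), x ∈ D A → x ∈ A ∪ oddNbhd G A)
    (hDmem : ∀ (A B : Finset V) (x : V), (x ∈ A ↔ x ∈ B) →
      (x ∈ oddNbhd G A ↔ x ∈ oddNbhd G B) → (x ∈ D A ↔ x ∈ D B))
    (hg : IsGflow G I O lam g)
    (hobst : ∀ u ∉ O, ∀ v ∈ D (g u), v ∉ O → v ≠ u → v ∈ D (g v)) :
    ∃ c : V → Finset V, IsGflow G I O lam c ∧ ∀ u ∉ O, ∀ x ∈ D (c u), x ∈ insert u O := by
  obtain ⟨hg1, ⟨r, hso, hext⟩, hg3⟩ := hg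
  have htrans : ∀ {a b c : V}, r a b → r b c → r a c :=
    fun h1 h2 => hso.toIsTrans.trans _ _ _ h1 h2
  have hirr : ∀ a : V, ¬ r a a := hso.toIrrefl.irrefl
  have hasymm : ∀ {a b : V}, r a b → ¬ r b a := fun h1 h2 => hirr _ (htrans h1 h2)
  haveI : IsTrans V (Function.swap r) := ⟨fun _ _ _ h1 h2 => htrans h2 h1⟩
  haveI : IsIrrefl V (Function.swap r) := ⟨hirr⟩
  have wf : WellFounded (Function.swap r) := Finite.wellFounded_of_trans_of_irrefl _
  set B : V → Finset V := fun u => if u ∈ O then ∅ else D (g u) \ insert u O with hB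
  have hBmem : ∀ {u v : V}, v ∈ B u → u ∉ O ∧ v ∈ D (g u) ∧ v ≠ u ∧ v ∉ O := by
    intro u v hv
    by_cases hu : u ∈ O
    · simp [hB, hu] at hv
    · simp only [hB, hu, if_neg, ite_false, Finset.mem_sdiff, Finset.mem_insert] at hv
      push_neg at hv
      exact ⟨hu, hv.1, hv.2.1, hv.2.2⟩
  have hBr : ∀ (u : V), ∀ v ∈ B u, r u v := by
    intro u v hv
    obtain ⟨hu, hvD, hvu, _⟩ := hBmem hv
    exact hext u hu v (hDsub _ _ hvD) hvu
  obtain ⟨c, hc⟩ : ∃ c : V → Finset V,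
      ∀ u, c u = g u ∆ sdSum (B u).attach (fun v => c v.1) :=
    ⟨wf.fix (fun u ih => g u ∆ sdSum (B u).attach (fun v => ih v.1 (hBr u v.1 v.2))),
      fun u => wf.fix_eq _ u⟩
  have expand : ∀ (F : Finset V → Finset V),
      (∀ A B x, ind (F (A ∆ B)) x = ind (F A) x + ind (F B) x) →
      ∀ (u x : V), ind (F (c u)) x = ind (F (g u)) x + ∑ v ∈ B u, ind (F (c v)) x := by
    intro F hF u x
    rw [hc u, hF, ind_sdSum_lin hF]
    rw [← Finset.sum_attach (B u) (fun v => ind (F (c v)) x)]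
  have hIdlin : ∀ (A B : Finset V) (x : V), ind (A ∆ B) x = ind A x + ind B x := ind_symmDiff
  have hOddlin := ind_oddNbhd_symmDiff G
  -- the invariant
  set P : V → Prop := fun u =>
    (∀ x ∈ c u, x ∈ Iᶜ) ∧
    (∀ w, (w ∈ c u ∨ w ∈ oddNbhd G (c u)) → w ≠ u → r u w) ∧
    (∀ x ∈ D (c u), x ∈ insert u O) ∧
    ((u ∈ c u ↔ u ∈ g u) ∧ (u ∈ oddNbhd G (c u) ↔ u ∈ oddNbhd G (g u))) with hP
  have key : ∀ u, u ∉ O → P u := by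
    intro u0
    refine wf.induction (C := fun u => u ∉ O → P u) u0 ?_
    intro u IH hu
    have IH' : ∀ v ∈ B u, P v := fun v hv => IH v (hBr u v hv) (hBmem hv).2.2.2
    -- extract an element of `B u` supporting membership in `c u` (resp. `oddNbhd (c u)`)
    have getv : ∀ (F : Finset V → Finset V),
        (∀ A B x, ind (F (A ∆ B)) x = ind (F A) x + ind (F B) x) →
        ∀ x, x ∈ F (c u) → x ∉ F (g u) → ∃ v ∈ B u, x ∈ F (c v) := by
      intro F hF x hx hxg
      have e := expand F hF u x
      rw [ind_eq_one.mpr hx, ind_eq_zero.mpr hxg, zero_add] at e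
      obtain ⟨v, hv, hv1⟩ := exists_mem_of_sum_ne_zero _ _ (by rw [← e]; exact one_ne_zero)
      exact ⟨v, hv, ind_eq_one.mp hv1⟩
    have ext2 : ∀ w, (w ∈ c u ∨ w ∈ oddNbhd G (c u)) → w ≠ u → r u w := by
      intro w hw hwu
      rcases hw with hw | hw
      · by_cases hwg : w ∈ g u
        · exact hext u hu w (Finset.mem_union_left _ hwg) hwu
        · obtain ⟨v, hv, hwv⟩ := getv (fun A => A) hIdlin w hw hwg
          rcases eq_or_ne w v with rfl | hne
          · exact hBr u w hv
          · exact htrans (hBr u v hv) ((IH' v hv).2.1 w (Or.inl hwv) hne)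
      · by_cases hwg : w ∈ oddNbhd G (g u)
        · exact hext u hu w (Finset.mem_union_right _ hwg) hwu
        · obtain ⟨v, hv, hwv⟩ := getv (oddNbhd G) hOddlin w hw hwg
          rcases eq_or_ne w v with rfl | hne
          · exact hBr u w hv
          · exact htrans (hBr u v hv) ((IH' v hv).2.1 w (Or.inr hwv) hne)
    have mem4 : (u ∈ c u ↔ u ∈ g u) ∧ (u ∈ oddNbhd G (c u) ↔ u ∈ oddNbhd G (g u)) := by
      have hnot : ∀ v ∈ B u, u ∉ c v ∧ u ∉ oddNbhd G (c v) := by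
        intro v hv
        have hruv := hBr u v hv
        have hune : u ≠ v := fun h => hirr u (h ▸ hruv)
        constructor
        · intro hm
          exact hasymm hruv ((IH' v hv).2.1 u (Or.inl hm) hune)
        · intro hm
          exact hasymm hruv ((IH' v hv).2.1 u (Or.inr hm) hune)
      constructor
      · have e := expand (fun A => A) hIdlin u u
        rw [Finset.sum_eq_zero (fun v hv => ind_eq_zero.mpr (hnot v hv).1), add_zero] at e
        rw [← ind_eq_one, ← ind_eq_one, e]
      · have e := expand (oddNbhd G) hOddlin u u
        rw [Finset.sum_eq_zero (fun v hv => ind_eq_zero.mpr (hnot v hv).2), add_zero] at e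
        rw [← ind_eq_one, ← ind_eq_one, e]
    refine ⟨?_, ext2, ?_, mem4⟩
    · -- c u ⊆ Iᶜ
      intro x hx
      by_cases hxg : x ∈ g u
      · exact hg1 u hu hxg
      · obtain ⟨v, hv, hxv⟩ := getv (fun A => A) hIdlin x hx hxg
        exact (IH' v hv).1 x hxv
    · -- normal form
      intro x hx
      by_contra hxn
      have hxu : x ≠ u ∧ x ∉ O := by
        simp only [Finset.mem_insert] at hxn; push_neg at hxn; exact hxn
      have e := expand D hDlin u x
      rw [ind_eq_one.mpr hx] at e
      by_cases hxB : x ∈ B u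
      · have hsum : ∑ v ∈ B u, ind (D (c v)) x = ind (D (c x)) x := by
          refine Finset.sum_eq_single_of_mem x hxB ?_
          intro v hv hvx
          refine ind_eq_zero.mpr fun hm => hvx ?_
          have := (IH' v hv).2.2.1 x hm
          rcases Finset.mem_insert.mp this with h | h
          · exact h ▸ rfl
          · exact absurd h hxu.2
        have hDcx : x ∈ D (c x) := by
          have hx1 : x ∈ D (g x) := hobst u hu x (hBmem hxB).2.1 hxu.2 hxu.1
          exact (hDmem (c x) (g x) x (IH' x hxB).2.2.2.1 (IH' x hxB).2.2.2.2).mpr hx1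
        rw [hsum, ind_eq_one.mpr hDcx, ind_eq_one.mpr (hBmem hxB).2.1] at e
        exact absurd e (by decide)
      · have hsum : ∑ v ∈ B u, ind (D (c v)) x = 0 := by
          refine Finset.sum_eq_zero fun v hv => ind_eq_zero.mpr fun hm => ?_
          have := (IH' v hv).2.2.1 x hm
          rcases Finset.mem_insert.mp this with h | h
          · exact hxB (h ▸ hv)
          · exact hxu.2 h
        rw [hsum, add_zero] at e
        refine hxB ?_
        have hBu : B u = D (g u) \ insert u O := by simp [hB, hu]
        rw [hBu, Finset.mem_sdiff, Finset.mem_insert]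
        refine ⟨ind_eq_one.mp e.symm, ?_⟩
        push_neg
        exact ⟨hxu.1, hxu.2⟩
  refine ⟨c, ⟨?_, ⟨r, hso, ?_⟩, ?_⟩, ?_⟩
  · exact fun u hu => (key u hu).1
  · intro u hu v hv hvu
    exact (key u hu).2.1 v (Finset.mem_union.mp hv) hvu
  · intro u hu
    have h4 := (key u hu).2.2.2
    have hp := hg3 u hu
    refine ⟨fun hxy => ?_, fun hxz => ?_, fun hyz => ?_⟩
    · obtain ⟨a, b⟩ := hp.1 hxy
      exact ⟨h4.2.mpr a, fun hm => b (h4.1.mp hm)⟩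
    · obtain ⟨a, b⟩ := hp.2.1 hxz
      exact ⟨h4.1.mpr a, h4.2.mpr b⟩
    · obtain ⟨a, b⟩ := hp.2.2 hyz
      exact ⟨h4.1.mpr a, fun hm => b (h4.2.mp hm)⟩
  · exact fun u hu => (key u hu).2.2.1

end Construction

section Forward
variable {V : Type} [Fintype V] [DecidableEq V]

lemma zmod2_eq_of_add_eq_zero {a b : ZMod 2} (h : a + b = 0) : b = a := by
  revert h
  rcases zmod2_cases a with rfl | rfl <;> rcases zmod2_cases b with rfl | rfl <;> decide

lemma planes_of_nf (σ : Pauli) (hσ : σ = .Y ∨ σ = .Z)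
    (G : SimpleGraph V) [DecidableRel G.Adj] (I O : Finset V) (lam : V → MPlane)
    (hcard : I.card = O.card)
    (c : V → Finset V) (hc : IsGflow G I O lam c) (hnf : IsNF σ G O c) :
    ∀ u₀, u₀ ∉ I → u₀ ∉ O → σ ∈ (lam u₀).paulis := by
  intro u₀ hu₀I hu₀O
  by_contra hbad
  obtain ⟨hc1, ⟨r, hso, hext⟩, hc3⟩ := hc
  obtain ⟨st, hstn, hsts⟩ : ∃ st : Option {u : V // u ∉ O} → Finset V,
      st none = {u₀} ∧ ∀ u, st (some u) = c u.1 :=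
    ⟨fun i => Option.elim i {u₀} (fun u => c u.1), rfl, fun _ => rfl⟩
  obtain ⟨f, hfdef⟩ : ∃ f : Option {u : V // u ∉ O} → ({x : V // x ∉ I} → ZMod 2),
      ∀ i x, f i x = ind (st i) x.1 :=
    ⟨fun i x => ind (st i) x.1, fun _ _ => rfl⟩
  have hsub : ∀ i, ∀ x ∈ st i, x ∉ I := by
    intro i x hx
    cases i with
    | none =>
        rw [hstn] at hx
        exact (Finset.mem_singleton.mp hx) ▸ hu₀I
    | some u =>
        rw [hsts] at hx
        exact Finset.mem_compl.mp (hc1 u.1 u.2 hx)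
  have hli : LinearIndependent (ZMod 2) f := by
    rw [Fintype.linearIndependent_iff]
    intro γ hγ
    have hall : ∀ x : V, ∑ i, γ i * ind (st i) x = 0 := by
      intro x
      by_cases hx : x ∈ I
      · refine Finset.sum_eq_zero fun i _ => ?_
        rw [ind_eq_zero.mpr (fun hm => hsub i x hm hx), mul_zero]
      · have h0 := congrFun hγ ⟨x, hx⟩
        rw [Finset.sum_apply] at h0
        simpa [hfdef] using h0
    set T : Finset (Option {u : V // u ∉ O}) := Finset.univ.filter (fun i => γ i = 1) with hT
    have hTsum : ∀ x : V, ∑ i ∈ T, ind (st i) x = 0 := by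
      intro x
      rw [← hall x, Finset.sum_filter]
      refine Finset.sum_congr rfl fun i _ => ?_
      rcases zmod2_cases (γ i) with h | h <;> simp [h]
    have hTsumOdd : ∀ x : V, ∑ i ∈ T, ind (oddNbhd G (st i)) x = 0 := by
      intro x
      calc ∑ i ∈ T, ind (oddNbhd G (st i)) x
          = ∑ i ∈ T, ∑ y ∈ Finset.univ, ind (st i) y * (if G.Adj x y then 1 else 0) :=
            Finset.sum_congr rfl fun i _ => ind_oddNbhd G (st i) x
        _ = ∑ y ∈ Finset.univ, ∑ i ∈ T, ind (st i) y * (if G.Adj x y then 1 else 0) :=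
            Finset.sum_comm
        _ = ∑ y ∈ Finset.univ, (∑ i ∈ T, ind (st i) y) * (if G.Adj x y then 1 else 0) :=
            Finset.sum_congr rfl fun y _ => (Finset.sum_mul _ _ _).symm
        _ = 0 := Finset.sum_eq_zero fun y _ => by rw [hTsum y, zero_mul]
    have hself : ind (oddNbhd G ({u₀} : Finset V)) u₀ = 0 := by
      refine ind_eq_zero.mpr ?_
      rw [mem_oddNbhd]
      intro hodd
      have hempty : ({u₀} : Finset V).filter (G.Adj u₀) = ∅ := by
        ext y
        simp only [Finset.mem_filter, Finset.mem_singleton, Finset.notMem_empty, iff_false]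
        rintro ⟨rfl, hadj⟩
        exact G.irrefl hadj
      rw [hempty] at hodd
      simp at hodd
    have hnone : none ∉ T := by
      intro hnoneT
      have hsum' : ∀ x, ∑ i ∈ T.erase none, ind (st i) x = ind ({u₀} : Finset V) x := by
        intro x
        refine zmod2_eq_of_add_eq_zero ?_
        rw [← hstn, Finset.add_sum_erase T (fun i => ind (st i) x) hnoneT]
        exact hTsum x
      have hsum'o : ∀ x, ∑ i ∈ T.erase none, ind (oddNbhd G (st i)) x
          = ind (oddNbhd G ({u₀} : Finset V)) x := by
        intro x
        refine zmod2_eq_of_add_eq_zero ?_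
        rw [← hstn, Finset.add_sum_erase T (fun i => ind (oddNbhd G (st i)) x) hnoneT]
        exact hTsumOdd x
      rcases hσ with rfl | rfl
      · -- σ = Y
        have hlam : lam u₀ = .XZ := by
          cases h : lam u₀
          · exact absurd (show Pauli.Y ∈ (lam u₀).paulis by rw [h]; decide) hbad
          · rfl
          · exact absurd (show Pauli.Y ∈ (lam u₀).paulis by rw [h]; decide) hbad
        obtain ⟨a, b⟩ := (hc3 u₀ hu₀O).2.1 hlam
        have hkey : ∑ i ∈ T.erase none, (ind (st i) u₀ + ind (oddNbhd G (st i)) u₀) = 1 := by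
          rw [Finset.sum_add_distrib, hsum' u₀, hsum'o u₀, hself,
            ind_eq_one.mpr (Finset.mem_singleton_self u₀), add_zero]
        obtain ⟨i, hi, hi1⟩ := exists_mem_of_sum_ne_zero _ _ (by rw [hkey]; exact one_ne_zero)
        cases i with
        | none => exact (Finset.mem_erase.mp hi).1 rfl
        | some v =>
          rw [hsts v] at hi1
          have hmem : u₀ ∈ c v.1 ∆ oddNbhd G (c v.1) := by
            rw [Finset.mem_symmDiff]
            rcases zmod2_cases (ind (c v.1) u₀) with h | h <;>
              rcases zmod2_cases (ind (oddNbhd G (c v.1)) u₀) with h' | h'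
            · rw [h, h'] at hi1; exact absurd hi1 (by decide)
            · exact Or.inr ⟨ind_eq_one.mp h', ind_eq_zero.mp h⟩
            · exact Or.inl ⟨ind_eq_one.mp h, ind_eq_zero.mp h'⟩
            · rw [h, h'] at hi1; exact absurd hi1 (by decide)
          have hins := hnf v.1 v.2 hmem
          rcases Finset.mem_insert.mp hins with h | h
          · rw [← h, Finset.mem_symmDiff] at hmem
            rcases hmem with ⟨_, h2⟩ | ⟨_, h2⟩
            · exact h2 b
            · exact h2 a
          · exact hu₀O h
      · -- σ = Z
        have hlam : lam u₀ = .XY := by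
          cases h : lam u₀
          · rfl
          · exact absurd (show Pauli.Z ∈ (lam u₀).paulis by rw [h]; decide) hbad
          · exact absurd (show Pauli.Z ∈ (lam u₀).paulis by rw [h]; decide) hbad
        obtain ⟨_, b⟩ := (hc3 u₀ hu₀O).1 hlam
        obtain ⟨i, hi, hi1⟩ := exists_mem_of_sum_ne_zero _ _
          (by rw [hsum' u₀, ind_eq_one.mpr (Finset.mem_singleton_self u₀)]; exact one_ne_zero)
        cases i with
        | none => exact (Finset.mem_erase.mp hi).1 rfl
        | some v =>
          rw [hsts v] at hi1
          have hmem : u₀ ∈ c v.1 := ind_eq_one.mp hi1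
          have hins := hnf v.1 v.2 hmem
          rcases Finset.mem_insert.mp hins with h | h
          · exact b (h ▸ hmem)
          · exact hu₀O h
    have hTempty : T = ∅ := by
      by_contra hne
      haveI : IsTrans V r := hso.toIsTrans
      haveI : IsIrrefl V r := hso.toIrrefl
      have wfr : WellFounded r := Finite.wellFounded_of_trans_of_irrefl r
      set M : Finset V := T.image (fun i => Option.elim i u₀ Subtype.val) with hM
      have hMne : M.Nonempty :=
        Finset.Nonempty.image (Finset.nonempty_iff_ne_empty.mpr hne) _
      obtain ⟨m, hmM, hmin⟩ := wfr.has_min ↑M (by exact_mod_cast hMne)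
      obtain ⟨i, hiT, hie⟩ := Finset.mem_image.mp (Finset.mem_coe.mp hmM)
      cases i with
      | none => exact hnone hiT
      | some w =>
        have hwm : w.1 = m := hie
        have hz : ∀ j ∈ T, j ≠ some w →
            ind (st j) m = 0 ∧ ind (oddNbhd G (st j)) m = 0 := by
          intro j hjT hjne
          cases j with
          | none => exact absurd hjT hnone
          | some w' =>
            have hw'M : w'.1 ∈ M := Finset.mem_image.mpr ⟨some w', hjT, rfl⟩
            have hne' : m ≠ w'.1 := by
              intro hh
              exact hjne (by rw [Subtype.ext (hh.symm.trans hwm.symm)])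
            have hw'S : (w'.1 : V) ∈ (↑M : Set V) := Finset.mem_coe.mpr hw'M
            rw [hsts w']
            constructor <;> refine ind_eq_zero.mpr fun hm => ?_
            · exact hmin w'.1 hw'S (hext w'.1 w'.2 m (Finset.mem_union_left _ hm) hne')
            · exact hmin w'.1 hw'S (hext w'.1 w'.2 m (Finset.mem_union_right _ hm) hne')
        have e1 : ind (c w.1) m = 0 := by
          have h0 := hTsum m
          rw [Finset.sum_eq_single_of_mem _ hiT (fun j hj hne => (hz j hj hne).1),
            hsts w] at h0
          exact h0
        have e2 : ind (oddNbhd G (c w.1)) m = 0 := by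
          have h0 := hTsumOdd m
          rw [Finset.sum_eq_single_of_mem _ hiT (fun j hj hne => (hz j hj hne).2),
            hsts w] at h0
          exact h0
        rw [hwm] at e1 e2
        have hmO : m ∉ O := hwm ▸ w.2
        have hp := hc3 m hmO
        have hcm : m ∉ c m := ind_eq_zero.mp e1
        have hom : m ∉ oddNbhd G (c m) := ind_eq_zero.mp e2
        cases h : lam m with
        | XY => exact hom (hp.1 h).1
        | XZ => exact hcm (hp.2.1 h).1
        | YZ => exact hcm (hp.2.2 h).1
    intro i
    rcases zmod2_cases (γ i) with h | h
    · exact h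
    · exfalso
      have hiT : i ∈ T := Finset.mem_filter.mpr ⟨Finset.mem_univ i, h⟩
      rw [hTempty] at hiT
      exact Finset.notMem_empty i hiT
  have hle := hli.fintype_card_le_finrank
  rw [Module.finrank_fintype_fun_eq_card] at hle
  have h1 : Fintype.card (Option {u : V // u ∉ O}) = Fintype.card {u : V // u ∉ O} + 1 :=
    Fintype.card_option
  have h2 : Fintype.card {u : V // u ∉ O} = Fintype.card V - O.card := by
    rw [Fintype.card_subtype_compl]
    congr 1
    exact Fintype.card_coe O
  have h3 : Fintype.card {x : V // x ∉ I} = Fintype.card V - I.card := by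
    rw [Fintype.card_subtype_compl]
    congr 1
    exact Fintype.card_coe I
  have h4 : O.card ≤ Fintype.card V := by
    rw [← Finset.card_univ]; exact Finset.card_le_univ O
  omega

end Forward

/-- For σ ∈ {Y, Z} and |I| = |O|: an extended open graph with a gflow has a σ-NF gflow
iff every non-input non-output measurement plane contains σ. -/
theorem sigmaNF_iff (σ : Pauli) (hσ : σ = .Y ∨ σ = .Z)
    (G : SimpleGraph V) [DecidableRel G.Adj]
    (I O : Finset V) (lam : V → MPlane)
    (hcard : I.card = O.card)
    (h : ∃ g : V → Finset V, IsGflow G I O lam g) :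
    (∃ g : V → Finset V, IsGflow G I O lam g ∧ IsNF σ G O g) ↔
      (∀ u, u ∉ I → u ∉ O → σ ∈ (lam u).paulis) := by
  constructor
  · rintro ⟨c, hc, hnf⟩ u hu1 hu2
    exact planes_of_nf σ hσ G I O lam hcard c hc hnf u hu1 hu2
  · intro hpl
    obtain ⟨g, hg⟩ := h
    have hg1 := hg.1
    have hg3 := hg.2.2
    rcases hσ with rfl | rfl
    · -- σ = Y
      have hDlin : ∀ A B x, ind ((A ∆ B) ∆ oddNbhd G (A ∆ B)) x
          = ind (A ∆ oddNbhd G A) x + ind (B ∆ oddNbhd G B) x := by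
        intro A B x
        rw [ind_symmDiff, ind_symmDiff, ind_symmDiff, ind_oddNbhd_symmDiff, ind_symmDiff]
        ring
      have hDsub : ∀ (A : Finset V) (x : V), x ∈ A ∆ oddNbhd G A → x ∈ A ∪ oddNbhd G A := by
        intro A x hx
        rcases Finset.mem_symmDiff.mp hx with ⟨h1, _⟩ | ⟨h1, _⟩
        · exact Finset.mem_union_left _ h1
        · exact Finset.mem_union_right _ h1
      have hDmem : ∀ (A B : Finset V) (x : V), (x ∈ A ↔ x ∈ B) →
          (x ∈ oddNbhd G A ↔ x ∈ oddNbhd G B) →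
          (x ∈ A ∆ oddNbhd G A ↔ x ∈ B ∆ oddNbhd G B) := by
        intro A B x h1 h2
        rw [Finset.mem_symmDiff, Finset.mem_symmDiff, h1, h2]
      have hobst : ∀ u ∉ O, ∀ v ∈ g u ∆ oddNbhd G (g u), v ∉ O → v ≠ u →
          v ∈ g v ∆ oddNbhd G (g v) := by
        intro u hu v _ hvO _
        cases hl : lam v with
        | XY =>
            obtain ⟨a, b⟩ := (hg3 v hvO).1 hl
            exact Finset.mem_symmDiff.mpr (Or.inr ⟨a, b⟩)
        | XZ =>
            exfalso
            by_cases hvI : v ∈ I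
            · exact Finset.mem_compl.mp (hg1 v hvO ((hg3 v hvO).2.1 hl).1) hvI
            · exact absurd (hpl v hvI hvO) (by rw [hl]; decide)
        | YZ =>
            obtain ⟨a, b⟩ := (hg3 v hvO).2.2 hl
            exact Finset.mem_symmDiff.mpr (Or.inl ⟨a, b⟩)
      obtain ⟨c, hcg, hnf⟩ := exists_nf G I O lam g (fun A => A ∆ oddNbhd G A)
        hDlin hDsub hDmem hg hobst
      exact ⟨c, hcg, fun u hu x hx => hnf u hu x hx⟩
    · -- σ = Z
      have hobst : ∀ u ∉ O, ∀ v ∈ g u, v ∉ O → v ≠ u → v ∈ g v := by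
        intro u hu v hv hvO _
        have hvI : v ∉ I := Finset.mem_compl.mp (hg1 u hu hv)
        cases hl : lam v with
        | XY => exact absurd (hpl v hvI hvO) (by rw [hl]; decide)
        | XZ => exact ((hg3 v hvO).2.1 hl).1
        | YZ => exact ((hg3 v hvO).2.2 hl).1
      obtain ⟨c, hcg, hnf⟩ := exists_nf G I O lam g (fun A => A)
        ind_symmDiff (fun A x hx => Finset.mem_union_left _ hx)
        (fun A B x h1 _ => h1) hg hobst
      exact ⟨c, hcg, fun u hu x hx => hnf u hu x hx⟩
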